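/- (Regularization Path Bound, RPB) Fix γ ∈ (0,1], a finite index set T, and symmetric matrices H_t ∈ ℝ^{d×d} (t ∈ T). Let λ₀, λ₁ > 0, let M₀* be optimal for λ₀ and M₁* be optimal for λ₁ (i.e., M_i* ⪰ O minimizes P_{λᵢ} over positive semi-definite matrices). Then ‖M₁* − ((λ₀+λ₁)/(2λ₁))·M₀*‖_F ≤ (|λ₀−λ₁|/(2λ₁))·‖M₀*‖_F. -/

import Mathlib

open scoped BigOperators
open scoped Matrix

/-- Frobenius inner product ⟨A,B⟩ = tr(Aᵀ B). -/
noncomputable def frob {d : ℕ} (A B : Matrix (Fin d) (Fin d) ℝ) : ℝ :=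
  Matrix.trace (Aᵀ * B)

/-- Frobenius norm ‖A‖_F = √⟨A,A⟩. -/
noncomputable def frobNorm {d : ℕ} (A : Matrix (Fin d) (Fin d) ℝ) : ℝ :=
  Real.sqrt (frob A A)

/-- Smoothed hinge loss ℓ_γ. -/
noncomputable def shinge (γ x : ℝ) : ℝ :=
  if 1 < x then 0 else if 1 - γ ≤ x then (1 - x) ^ 2 / (2 * γ) else 1 - x - γ / 2

/-- Derivative of the smoothed hinge loss ℓ_γ'. -/
noncomputable def shinge' (γ x : ℝ) : ℝ :=
  if 1 < x then 0 else if 1 - γ ≤ x then -(1 - x) / γ else -1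

/-- Primal objective P_λ(M) = Σ_t ℓ_γ(⟨M,H_t⟩) + (λ/2)‖M‖_F². -/
noncomputable def Pobj {d : ℕ} {ι : Type*} (γ lam : ℝ) (T : Finset ι)
    (H : ι → Matrix (Fin d) (Fin d) ℝ) (M : Matrix (Fin d) (Fin d) ℝ) : ℝ :=
  (∑ t ∈ T, shinge γ (frob M (H t))) + lam / 2 * frobNorm M ^ 2

/-- Gradient ∇P_λ(M) = Σ_t ℓ_γ'(⟨M,H_t⟩) H_t + λ M. -/
noncomputable def gradP {d : ℕ} {ι : Type*} (γ lam : ℝ) (T : Finset ι)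
    (H : ι → Matrix (Fin d) (Fin d) ℝ) (M : Matrix (Fin d) (Fin d) ℝ) :
    Matrix (Fin d) (Fin d) ℝ :=
  (∑ t ∈ T, shinge' γ (frob M (H t)) • H t) + lam • M

lemma frob_eq_sum {d : ℕ} (A B : Matrix (Fin d) (Fin d) ℝ) :
    frob A B = ∑ j, ∑ i, A i j * B i j := by
  rw [frob, Matrix.trace]
  refine Finset.sum_congr rfl fun j _ => ?_
  rw [Matrix.diag_apply, Matrix.mul_apply]
  exact Finset.sum_congr rfl fun i _ => by rw [Matrix.transpose_apply]

lemma frob_comm {d : ℕ} (A B : Matrix (Fin d) (Fin d) ℝ) : frob A B = frob B A := by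
  simp [frob_eq_sum, mul_comm]

lemma frob_self_nonneg {d : ℕ} (A : Matrix (Fin d) (Fin d) ℝ) : 0 ≤ frob A A := by
  rw [frob_eq_sum]
  refine Finset.sum_nonneg fun j _ => Finset.sum_nonneg fun i _ => mul_self_nonneg _

lemma frob_add_left {d : ℕ} (A B C : Matrix (Fin d) (Fin d) ℝ) :
    frob (A + B) C = frob A C + frob B C := by
  simp [frob_eq_sum, Matrix.add_apply, add_mul, Finset.sum_add_distrib]

lemma frob_smul_left {d : ℕ} (r : ℝ) (A B : Matrix (Fin d) (Fin d) ℝ) :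
    frob (r • A) B = r * frob A B := by
  simp [frob_eq_sum, Matrix.smul_apply, smul_eq_mul, mul_assoc, Finset.mul_sum]

lemma frob_add_right {d : ℕ} (A B C : Matrix (Fin d) (Fin d) ℝ) :
    frob A (B + C) = frob A B + frob A C := by
  rw [frob_comm, frob_add_left, frob_comm B A, frob_comm C A]

lemma frob_smul_right {d : ℕ} (r : ℝ) (A B : Matrix (Fin d) (Fin d) ℝ) :
    frob A (r • B) = r * frob A B := by
  rw [frob_comm, frob_smul_left, frob_comm B A]

lemma frob_sub_left {d : ℕ} (A B C : Matrix (Fin d) (Fin d) ℝ) :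
    frob (A - B) C = frob A C - frob B C := by
  rw [sub_eq_add_neg, frob_add_left, ← neg_one_smul ℝ B, frob_smul_left]; ring

lemma frob_sub_right {d : ℕ} (A B C : Matrix (Fin d) (Fin d) ℝ) :
    frob A (B - C) = frob A B - frob A C := by
  rw [frob_comm, frob_sub_left, frob_comm B A, frob_comm C A]

lemma frob_sub_sub {d : ℕ} (A B : Matrix (Fin d) (Fin d) ℝ) :
    frob (A - B) (A - B) = frob A A - 2 * frob A B + frob B B := by
  rw [frob_sub_left, frob_sub_right, frob_sub_right, frob_comm B A]; ring

lemma frob_comb {d : ℕ} (s t : ℝ) (A B : Matrix (Fin d) (Fin d) ℝ) :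
    frob (s • A + t • B) (s • A + t • B) =
      s ^ 2 * frob A A + 2 * s * t * frob A B + t ^ 2 * frob B B := by
  simp only [frob_add_left, frob_add_right, frob_smul_left, frob_smul_right, frob_comm B A]
  ring

lemma frob_sub_smul {d : ℕ} (c : ℝ) (A B : Matrix (Fin d) (Fin d) ℝ) :
    frob (A - c • B) (A - c • B) =
      frob A A - 2 * c * frob B A + c ^ 2 * frob B B := by
  rw [frob_sub_sub, frob_smul_right, frob_smul_left, frob_smul_right, frob_comm A B]
  ring

lemma frobNorm_sq {d : ℕ} (A : Matrix (Fin d) (Fin d) ℝ) :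
    frobNorm A ^ 2 = frob A A := Real.sq_sqrt (frob_self_nonneg A)

lemma posSemidef_comb {d : ℕ} {A B : Matrix (Fin d) (Fin d) ℝ}
    (hA : A.PosSemidef) (hB : B.PosSemidef) {s t : ℝ} (hs : 0 ≤ s) (ht : 0 ≤ t) :
    (s • A + t • B).PosSemidef := by
  constructor
  · have hA1 := hA.1
    have hB1 := hB.1
    simp only [Matrix.IsHermitian] at *
    rw [Matrix.conjTranspose_add, Matrix.conjTranspose_smul]
    rw [Matrix.conjTranspose_smul, hA1, hB1]
    norm_num
  · intro x
    have h1 := hA.2 x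
    have h2 := hB.2 x
    exact ((hA.smul hs).add (hB.smul ht)).2 x

lemma hasDerivAt_quad (γ x : ℝ) (hγ : 0 < γ) :
    HasDerivAt (fun y : ℝ => (1 - y) ^ 2 / (2 * γ)) (-(1 - x) / γ) x := by
  have h : HasDerivAt (fun y : ℝ => (1 - y) ^ 2) (2 * (1 - x) ^ 1 * (-1)) x := by
    have h0 : HasDerivAt (fun y : ℝ => 1 - y) (-1) x := by
      simpa using (hasDerivAt_id x).const_sub 1
    exact h0.pow 2
  have := h.div_const (2 * γ)
  refine this.congr_deriv ?_
  field_simp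

lemma hasDerivAt_lin (γ x : ℝ) :
    HasDerivAt (fun y : ℝ => 1 - y - γ / 2) (-1) x := by
  simpa using ((hasDerivAt_id x).const_sub 1).sub_const (γ / 2)

lemma hasDerivAt_shinge (γ : ℝ) (hγ : 0 < γ) (hγ1 : γ ≤ 1) (x : ℝ) :
    HasDerivAt (shinge γ) (shinge' γ x) x := by
  rcases lt_trichotomy x 1 with hx1 | hx1 | hx1
  · rcases lt_trichotomy x (1 - γ) with hx2 | hx2 | hx2
    · -- linear region
      have he : shinge γ =ᶠ[nhds x] (fun y => 1 - y - γ / 2) := by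
        filter_upwards [Iio_mem_nhds hx2] with y hy
        rw [shinge, if_neg (by linarith [Set.mem_Iio.mp hy] : ¬ (1:ℝ) < y),
          if_neg (by linarith [Set.mem_Iio.mp hy] : ¬ (1 - γ ≤ y))]
      have hs : shinge' γ x = -1 := by
        rw [shinge', if_neg (by linarith : ¬ (1:ℝ) < x), if_neg (by linarith : ¬ (1 - γ ≤ x))]
      rw [hs]
      exact (hasDerivAt_lin γ x).congr_of_eventuallyEq he
    · -- x = 1 - γ : glue
      subst hx2
      have hs : shinge' γ (1 - γ) = -1 := by
        rw [shinge', if_neg (by linarith : ¬ (1:ℝ) < 1 - γ), if_pos le_rfl]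
        field_simp
        ring
      rw [hs]
      have hval : shinge γ (1 - γ) = 1 - (1 - γ) - γ / 2 := by
        rw [shinge, if_neg (by linarith : ¬ (1:ℝ) < 1 - γ), if_pos le_rfl]
        field_simp; ring
      have hL : HasDerivWithinAt (shinge γ) (-1) (Set.Iic (1 - γ)) (1 - γ) := by
        have h := (hasDerivAt_lin γ (1 - γ)).hasDerivWithinAt (s := Set.Iic (1 - γ))
        refine h.congr (fun y hy => ?_) hval
        rcases eq_or_lt_of_le (Set.mem_Iic.mp hy) with h' | h'
        · rw [h', hval]
        · rw [shinge, if_neg (by linarith : ¬ (1:ℝ) < y), if_neg (not_le.mpr h')]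
      have hR : HasDerivWithinAt (shinge γ) (-1) (Set.Ici (1 - γ)) (1 - γ) := by
        have h := (hasDerivAt_quad γ (1 - γ) hγ).hasDerivWithinAt (s := Set.Ici (1 - γ))
        have h' : HasDerivWithinAt (fun y : ℝ => (1 - y) ^ 2 / (2 * γ))
            (-1) (Set.Ici (1 - γ)) (1 - γ) := by
          refine h.congr_deriv ?_
          field_simp
          ring
        refine h'.congr_of_eventuallyEq ?_ (by rw [hval]; field_simp; ring)
        filter_upwards [Filter.inter_mem self_mem_nhdsWithin
          (mem_nhdsWithin_of_mem_nhds (Iio_mem_nhds (by linarith : (1:ℝ) - γ < 1)))] with y hy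
        obtain ⟨hy1, hy2⟩ := hy
        rw [shinge, if_neg (not_lt.mpr (le_of_lt hy2)), if_pos (Set.mem_Ici.mp hy1)]
      have := hL.union hR
      rwa [Set.Iic_union_Ici, hasDerivWithinAt_univ] at this
    · -- quadratic region
      have he : shinge γ =ᶠ[nhds x] (fun y => (1 - y) ^ 2 / (2 * γ)) := by
        filter_upwards [Ioo_mem_nhds hx2 hx1] with y hy
        rw [shinge, if_neg (by linarith [hy.2] : ¬ (1:ℝ) < y),
          if_pos (by linarith [hy.1] : (1 - γ ≤ y))]
      have hs : shinge' γ x = -(1 - x) / γ := by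
        rw [shinge', if_neg (by linarith : ¬ (1:ℝ) < x), if_pos (by linarith : (1 - γ ≤ x))]
      rw [hs]
      exact (hasDerivAt_quad γ x hγ).congr_of_eventuallyEq he
  · -- x = 1 : glue
    subst hx1
    have hs : shinge' γ 1 = 0 := by
      rw [shinge', if_neg (lt_irrefl 1), if_pos (by linarith)]; simp
    rw [hs]
    have hval : shinge γ 1 = 0 := by
      rw [shinge, if_neg (lt_irrefl 1), if_pos (by linarith)]; simp
    have hL : HasDerivWithinAt (shinge γ) 0 (Set.Iic 1) 1 := by
      have h := (hasDerivAt_quad γ 1 hγ).hasDerivWithinAt (s := Set.Iic 1)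
      have h' : HasDerivWithinAt (fun y : ℝ => (1 - y) ^ 2 / (2 * γ)) 0 (Set.Iic 1) 1 := by
        refine h.congr_deriv ?_; simp
      refine h'.congr_of_eventuallyEq ?_ (by rw [hval]; simp)
      filter_upwards [Filter.inter_mem self_mem_nhdsWithin
        (mem_nhdsWithin_of_mem_nhds (Ioi_mem_nhds (by linarith : 1 - γ < 1)))] with y hy
      obtain ⟨hy1, hy2⟩ := hy
      rw [shinge, if_neg (not_lt.mpr (Set.mem_Iic.mp hy1)), if_pos (le_of_lt hy2)]
    have hR : HasDerivWithinAt (shinge γ) 0 (Set.Ici 1) 1 := by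
      have h := (hasDerivAt_const (1:ℝ) (0:ℝ)).hasDerivWithinAt (s := Set.Ici 1)
      refine h.congr (fun y hy => ?_) (by rw [hval])
      rcases eq_or_lt_of_le (Set.mem_Ici.mp hy) with h' | h'
      · rw [← h', hval]
      · rw [shinge, if_pos h']
    have := hL.union hR
    rwa [Set.Iic_union_Ici, hasDerivWithinAt_univ] at this
  · have he : shinge γ =ᶠ[nhds x] (fun _ => (0:ℝ)) := by
      filter_upwards [Ioi_mem_nhds hx1] with y hy
      rw [shinge, if_pos (Set.mem_Ioi.mp hy)]
    have hs : shinge' γ x = 0 := by rw [shinge', if_pos hx1]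
    rw [hs]
    exact (hasDerivAt_const x 0).congr_of_eventuallyEq he

lemma monotone_shinge' (γ : ℝ) (hγ : 0 < γ) : Monotone (shinge' γ) := by
  intro x y hxy
  unfold shinge'
  split_ifs <;>
    first
      | rfl
      | linarith
      | (rw [div_le_div_iff₀ hγ hγ]; nlinarith)
      | (rw [le_div_iff₀ hγ]; nlinarith)
      | (rw [div_le_iff₀ hγ]; nlinarith)
      | norm_num

lemma convexOn_shinge (γ : ℝ) (hγ : 0 < γ) (hγ1 : γ ≤ 1) :
    ConvexOn ℝ Set.univ (shinge γ) := by
  have hdiff : Differentiable ℝ (shinge γ) := fun x => (hasDerivAt_shinge γ hγ hγ1 x).differentiableAt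
  have hderiv : deriv (shinge γ) = shinge' γ := funext fun x => (hasDerivAt_shinge γ hγ hγ1 x).deriv
  exact Monotone.convexOn_univ_of_deriv hdiff (hderiv ▸ monotone_shinge' γ hγ)

lemma shinge_segment (γ : ℝ) (hγ : 0 < γ) (hγ1 : γ ≤ 1) (a b t : ℝ)
    (ht0 : 0 ≤ t) (ht1 : t ≤ 1) :
    shinge γ ((1 - t) * a + t * b) ≤ (1 - t) * shinge γ a + t * shinge γ b := by
  have := (convexOn_shinge γ hγ hγ1).2 (Set.mem_univ a) (Set.mem_univ b)
    (by linarith : (0:ℝ) ≤ 1 - t) ht0 (by ring)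
  simpa using this


set_option maxHeartbeats 1000000 in
lemma strong_min {d : ℕ} {ι : Type*} (γ lam : ℝ) (hγ : 0 < γ) (hγ1 : γ ≤ 1)
    (hlam : 0 < lam) (T : Finset ι) (H : ι → Matrix (Fin d) (Fin d) ℝ)
    (Ms : Matrix (Fin d) (Fin d) ℝ) (hMs : Ms.PosSemidef)
    (hopt : ∀ M' : Matrix (Fin d) (Fin d) ℝ, M'.PosSemidef →
      Pobj γ lam T H Ms ≤ Pobj γ lam T H M')
    (M' : Matrix (Fin d) (Fin d) ℝ) (hM' : M'.PosSemidef) :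
    Pobj γ lam T H Ms + lam / 2 * frob (M' - Ms) (M' - Ms) ≤ Pobj γ lam T H M' := by
  have hD : frob (M' - Ms) (M' - Ms) =
      frob M' M' - 2 * frob Ms M' + frob Ms Ms := by
    rw [frob_sub_sub, frob_comm M' Ms]
  set S0 := ∑ t ∈ T, shinge γ (frob Ms (H t)) with hS0
  set S1 := ∑ t ∈ T, shinge γ (frob M' (H t)) with hS1
  set N0 := frob Ms Ms with hN0
  set N1 := frob M' M' with hN1
  set I := frob Ms M' with hI
  have hDnn : 0 ≤ N1 - 2*I + N0 := by rw [← hD]; exact frob_self_nonneg _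
  have hc : (0:ℝ) < lam / 2 := by positivity
  simp only [Pobj, frobNorm_sq, ← hS0, ← hS1, ← hN0, ← hN1, hD, ← hI]
  refine le_of_forall_pos_le_add fun ε hε => ?_
  set Q : ℝ := lam / 2 * (N1 - 2*I + N0) with hQdef
  have hQnn : 0 ≤ Q := mul_nonneg hc.le hDnn
  set t : ℝ := min 1 (ε / (Q + 1)) with htdef
  have ht0 : 0 < t := lt_min one_pos (by positivity)
  have ht1 : t ≤ 1 := min_le_left _ _
  have htD : t * Q ≤ ε := by
    have h1 : t * Q ≤ (ε / (Q + 1)) * Q :=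
      mul_le_mul_of_nonneg_right (min_le_right _ _) hQnn
    have h2 : (ε / (Q + 1)) * Q ≤ (ε / (Q + 1)) * (Q + 1) :=
      mul_le_mul_of_nonneg_left (by linarith) (by positivity)
    have h3 : (ε / (Q + 1)) * (Q + 1) = ε := div_mul_cancel₀ _ (by positivity)
    linarith
  have hMt : ((1 - t) • Ms + t • M').PosSemidef :=
    posSemidef_comb hMs hM' (by linarith) ht0.le
  have hchain := hopt _ hMt
  simp only [Pobj, frobNorm_sq] at hchain
  have hloss : ∑ s ∈ T, shinge γ (frob ((1 - t) • Ms + t • M') (H s)) ≤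
      (1 - t) * S0 + t * S1 := by
    have hle : ∀ s ∈ T, shinge γ (frob ((1 - t) • Ms + t • M') (H s)) ≤
        (1 - t) * shinge γ (frob Ms (H s)) + t * shinge γ (frob M' (H s)) := by
      intro s _
      have hf : frob ((1 - t) • Ms + t • M') (H s) =
          (1 - t) * frob Ms (H s) + t * frob M' (H s) := by
        rw [frob_add_left, frob_smul_left, frob_smul_left]
      rw [hf]
      exact shinge_segment γ hγ hγ1 _ _ t ht0.le ht1
    calc ∑ s ∈ T, shinge γ (frob ((1 - t) • Ms + t • M') (H s))
        ≤ ∑ s ∈ T, ((1 - t) * shinge γ (frob Ms (H s)) + t * shinge γ (frob M' (H s))) :=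
          Finset.sum_le_sum hle
      _ = (1 - t) * S0 + t * S1 := by
          rw [Finset.sum_add_distrib, ← Finset.mul_sum, ← Finset.mul_sum]
  have hquad : frob ((1 - t) • Ms + t • M') ((1 - t) • Ms + t • M') =
      (1 - t) ^ 2 * N0 + 2 * (1 - t) * t * I + t ^ 2 * N1 := frob_comb _ _ _ _
  rw [hquad] at hchain
  have hchain2 : S0 + lam / 2 * N0 ≤
      (1 - t) * S0 + t * S1 +
        lam / 2 * ((1 - t) ^ 2 * N0 + 2 * (1 - t) * t * I + t ^ 2 * N1) := by
    linarith [mul_le_mul_of_nonneg_left (le_refl (0:ℝ)) hc.le, hchain, hloss]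
  have hkey : t * (S0 - S1 - lam / 2 * ((t - 2) * N0 + 2 * (1 - t) * I + t * N1)) ≤ 0 := by
    nlinarith [hchain2]
  have hZ : S0 - S1 - lam / 2 * ((t - 2) * N0 + 2 * (1 - t) * I + t * N1) ≤ 0 := by
    by_contra hcon
    push_neg at hcon
    nlinarith [mul_pos ht0 hcon]
  have htQ : t * Q = lam / 2 * (t * N1 - 2 * t * I + t * N0) := by
    rw [hQdef]; ring
  nlinarith [hZ, htD, htQ]

/-- Regularization Path Bound (RPB). -/
theorem regularization_path_bound {d : ℕ} {ι : Type*} (γ lam0 lam1 : ℝ)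
    (hγ : 0 < γ) (hγ1 : γ ≤ 1) (hlam0 : 0 < lam0) (hlam1 : 0 < lam1)
    (T : Finset ι) (H : ι → Matrix (Fin d) (Fin d) ℝ)
    (hH : ∀ t ∈ T, (H t).IsSymm)
    (M0star M1star : Matrix (Fin d) (Fin d) ℝ)
    (hM0 : M0star.PosSemidef)
    (hopt0 : ∀ M' : Matrix (Fin d) (Fin d) ℝ, M'.PosSemidef →
      Pobj γ lam0 T H M0star ≤ Pobj γ lam0 T H M')
    (hM1 : M1star.PosSemidef)
    (hopt1 : ∀ M' : Matrix (Fin d) (Fin d) ℝ, M'.PosSemidef →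
      Pobj γ lam1 T H M1star ≤ Pobj γ lam1 T H M') :
    frobNorm (M1star - ((lam0 + lam1) / (2 * lam1)) • M0star) ≤
      |lam0 - lam1| / (2 * lam1) * frobNorm M0star := by
  have h0 := strong_min γ lam0 hγ hγ1 hlam0 T H M0star hM0 hopt0 M1star hM1
  have h1 := strong_min γ lam1 hγ hγ1 hlam1 T H M1star hM1 hopt1 M0star hM0
  simp only [Pobj, frobNorm_sq] at h0 h1
  have hD0 : frob (M1star - M0star) (M1star - M0star) =
      frob M1star M1star - 2 * frob M0star M1star + frob M0star M0star := by
    rw [frob_sub_sub, frob_comm M1star M0star]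
  have hD1 : frob (M0star - M1star) (M0star - M1star) =
      frob M0star M0star - 2 * frob M0star M1star + frob M1star M1star := by
    rw [frob_sub_sub]
  set S0 := ∑ t ∈ T, shinge γ (frob M0star (H t)) with hS0
  set S1 := ∑ t ∈ T, shinge γ (frob M1star (H t)) with hS1
  set N0 := frob M0star M0star with hN0
  set N1 := frob M1star M1star with hN1
  set I := frob M0star M1star with hI
  rw [hD0] at h0
  rw [hD1] at h1
  have key : lam1 * N1 + lam0 * N0 ≤ (lam0 + lam1) * I := by nlinarith [h0, h1]
  have hr0 : (0:ℝ) ≤ |lam0 - lam1| / (2 * lam1) := by positivity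
  have hQle : frob (M1star - ((lam0 + lam1) / (2 * lam1)) • M0star)
        (M1star - ((lam0 + lam1) / (2 * lam1)) • M0star) ≤
      (|lam0 - lam1| / (2 * lam1)) ^ 2 * N0 := by
    rw [frob_sub_smul, ← hI, ← hN0, ← hN1]
    have hr2 : (|lam0 - lam1| / (2 * lam1)) ^ 2 = (lam0 - lam1) ^ 2 / (4 * lam1 ^ 2) := by
      rw [div_pow, sq_abs]; ring_nf
    rw [hr2]
    have h4 : (0:ℝ) < 4 * lam1 ^ 2 := by positivity
    have key2 : 4 * lam1 * (lam1 * N1 + lam0 * N0) ≤ 4 * lam1 * ((lam0 + lam1) * I) :=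
      mul_le_mul_of_nonneg_left key (by positivity)
    rw [← sub_nonneg]
    have hmul : 4 * lam1 ^ 2 * ((lam0 - lam1) ^ 2 / (4 * lam1 ^ 2) * N0 -
        (N1 - 2 * ((lam0 + lam1) / (2 * lam1)) * I + ((lam0 + lam1) / (2 * lam1)) ^ 2 * N0)) =
        4 * lam1 * ((lam0 + lam1) * I) - 4 * lam1 * (lam1 * N1 + lam0 * N0) := by
      field_simp
      ring
    nlinarith [key2, hmul, h4]
  rw [frobNorm, frobNorm, ← hN0]
  calc Real.sqrt (frob (M1star - ((lam0 + lam1) / (2 * lam1)) • M0star)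
        (M1star - ((lam0 + lam1) / (2 * lam1)) • M0star))
      ≤ Real.sqrt ((|lam0 - lam1| / (2 * lam1)) ^ 2 * N0) := Real.sqrt_le_sqrt hQle
    _ = |lam0 - lam1| / (2 * lam1) * Real.sqrt N0 := by
        rw [Real.sqrt_mul (sq_nonneg _), Real.sqrt_sq hr0]
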